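/- Let X be a metric space, let φ be a lower semicontinuous submeasure on ℕ such that I_φ is an ideal on ℕ, let x = (x_n) be a sequence in X, and let q > 0 be a real number. Then the set Λ_x(I_φ, q) := {ℓ ∈ X : there exists A ⊆ ℕ with ‖A‖_φ ≥ q such that the subsequence (x_n : n ∈ A) converges to ℓ} is closed in X. -/

import Mathlib

open Filter Topology MeasureTheory Set

noncomputable section

/-- A lower semicontinuous submeasure on `ℕ`:  `φ : P(ℕ) → [0,∞]` with `φ(∅) = 0`,
`φ({n}) < ∞`, monotone, subadditive, and `φ(A) = lim_n φ(A ∩ {0,…,n-1})`. -/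
structure LSCSubmeasure where
  toFun : Set ℕ → ENNReal
  empty' : toFun ∅ = 0
  singleton_lt_top' : ∀ n : ℕ, toFun {n} < ⊤
  mono' : ∀ ⦃A B : Set ℕ⦄, A ⊆ B → toFun A ≤ toFun B
  subadd' : ∀ A B : Set ℕ, toFun (A ∪ B) ≤ toFun A + toFun B
  lsc' : ∀ A : Set ℕ, Tendsto (fun n => toFun (A ∩ {m | m < n})) atTop (𝓝 (toFun A))

/-- `‖A‖_φ := lim_n φ(A \ {0,…,n-1})`; since the sequence is antitone, the limit
is the infimum. -/
def LSCSubmeasure.norm (φ : LSCSubmeasure) (A : Set ℕ) : ENNReal :=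
  ⨅ n : ℕ, φ.toFun (A \ {m | m < n})

/-- The (analytic P-)ideal `I_φ = {A : ‖A‖_φ = 0}` associated with `φ`. -/
def LSCSubmeasure.ideal (φ : LSCSubmeasure) : Set (Set ℕ) :=
  {A | φ.norm A = 0}

/-- `I` is an ideal on `ℕ`: closed under finite unions and subsets, contains all
finite sets, and is proper. -/
def IsIdealOnNat (I : Set (Set ℕ)) : Prop :=
  (∀ A B : Set ℕ, A ∈ I → B ∈ I → A ∪ B ∈ I) ∧
  (∀ A B : Set ℕ, A ⊆ B → B ∈ I → A ∈ I) ∧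
  (∀ A : Set ℕ, A.Finite → A ∈ I) ∧
  (Set.univ : Set ℕ) ∉ I

/-- Convergence of the subsequence `(x_n : n ∈ A)` to `l`. -/
def ConvergesAlong {X : Type*} [TopologicalSpace X] (x : ℕ → X) (A : Set ℕ) (l : X) : Prop :=
  Tendsto x (atTop ⊓ 𝓟 A) (𝓝 l)

/-- `Λ_x(I)`: the set of `I`-limit points of the sequence `x`. -/
def idealLimitPoints {X : Type*} [TopologicalSpace X] (I : Set (Set ℕ)) (x : ℕ → X) : Set X :=
  {l | ∃ A : Set ℕ, A ∉ I ∧ ConvergesAlong x A l}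

/-- `Γ_x(I)`: the set of `I`-cluster points of the sequence `x`. -/
def idealClusterPoints {X : Type*} [TopologicalSpace X] (I : Set (Set ℕ)) (x : ℕ → X) : Set X :=
  {l | ∀ U ∈ 𝓝 l, {n | x n ∈ U} ∉ I}

/-- `Λ_x(I_φ, q)`: the set of `ℓ` such that some subsequence `(x_n : n ∈ A)` with
`‖A‖_φ ≥ q` converges to `ℓ`. -/
def LambdaQ {X : Type*} [TopologicalSpace X] (φ : LSCSubmeasure) (x : ℕ → X) (q : ℝ) : Set X :=
  {l | ∃ A : Set ℕ, ENNReal.ofReal q ≤ φ.norm A ∧ ConvergesAlong x A l}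

/-- The summable ideal `I_f = {S : ∑_{n ∈ S} f(n) < ∞}`. -/
def summableIdeal (f : ℕ → ℝ) : Set (Set ℕ) := {S | Summable (S.indicator f)}

/-- `A` has asymptotic density `d`. -/
def HasDensity (A : Set ℕ) (d : ℝ) : Prop :=
  Tendsto (fun n => (∑ i ∈ Finset.range n, A.indicator (fun _ => (1 : ℝ)) i) / (n : ℝ))
    atTop (𝓝 d)

/-- `A_B := {a_b : b ∈ B}`, where `a_0 < a_1 < ⋯` is the increasing enumeration of `A`. -/
def sel (A B : Set ℕ) : Set ℕ := (fun b => Nat.nth (· ∈ A) b) '' B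

/-- `A ≤ B`: the increasing enumerations satisfy `a_n ≤ b_n` for all `n`. -/
def enumLE (A B : Set ℕ) : Prop := ∀ n : ℕ, Nat.nth (· ∈ A) n ≤ Nat.nth (· ∈ B) n

/-- `I` is weakly thinnable: `A_B ∉ I` whenever `A` has non-zero asymptotic density
and `B ∉ I`. -/
def WeaklyThinnable (I : Set (Set ℕ)) : Prop :=
  ∀ A B : Set ℕ, (∃ d : ℝ, 0 < d ∧ HasDensity A d) → B ∉ I → sel A B ∉ I

/-- `I` is thinnable: weakly thinnable, and moreover `B_A ∉ I` under the same
hypotheses, and `X ∉ I` whenever `X ≤ Y` and `Y ∉ I`. -/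
def Thinnable (I : Set (Set ℕ)) : Prop :=
  WeaklyThinnable I ∧
  (∀ A B : Set ℕ, (∃ d : ℝ, 0 < d ∧ HasDensity A d) → B ∉ I → sel B A ∉ I) ∧
  (∀ X Y : Set ℕ, enumLE X Y → Y ∉ I → X ∉ I)

/-- The analytic P-ideal `I_φ` is strongly thinnable. -/
def StronglyThinnable (φ : LSCSubmeasure) : Prop :=
  WeaklyThinnable φ.ideal ∧
  (∀ q : ℝ, 0 < q → ∀ A : Set ℕ, ∀ a : ℝ, 0 < a → HasDensity A a →
    ∃ c : ℝ, 0 < c ∧ ∀ B : Set ℕ, ENNReal.ofReal q ≤ φ.norm B →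
      ENNReal.ofReal (c * q) ≤ φ.norm (sel B A)) ∧
  (∃ c : ℝ, 0 < c ∧ ∀ X Y : Set ℕ, enumLE X Y →
    ENNReal.ofReal c * φ.norm Y ≤ φ.norm X)

/-- The `i`-th digit (0-indexed, so this is `d_{i+1}(ω)`) of the non-terminating
dyadic expansion of `ω ∈ (0,1]`. -/
def dyadicDigit (ω : ℝ) (i : ℕ) : ℕ :=
  (⌈(2 : ℝ) ^ (i + 1) * ω⌉ - 2 * ⌈(2 : ℝ) ^ i * ω⌉ + 1).toNat

/-- `x↾ω`: the subsequence of `x` indexed by the set `{i : d_i(ω) = 1}`. -/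
def subseq {X : Type*} (x : ℕ → X) (ω : ℝ) : ℕ → X :=
  fun k => x (Nat.nth (fun i => dyadicDigit ω i = 1) k)

/-- The Erdős–Ulam ideal `E_f` associated with a weight `f`. -/
def ErdosUlamIdeal (f : ℕ → ℝ) : Set (Set ℕ) :=
  {S | Tendsto (fun n => (∑ i ∈ Finset.Icc 1 n, S.indicator f i) /
        (∑ i ∈ Finset.Icc 1 n, f i)) atTop (𝓝 0)}

/-- The upper `α`-density `d_α^⋆(S)`. -/
def upperAlphaDensity (α : ℝ) (S : Set ℕ) : ℝ :=
  limsup (fun n => (∑ i ∈ Finset.Icc 1 n, S.indicator (fun i => (i : ℝ) ^ α) i) /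
    (∑ i ∈ Finset.Icc 1 n, (i : ℝ) ^ α)) atTop

/-- `S` has `α`-asymptotic density `d`. -/
def HasAlphaDensity (α : ℝ) (S : Set ℕ) (d : ℝ) : Prop :=
  Tendsto (fun n => (∑ i ∈ Finset.Icc 1 n, S.indicator (fun i => (i : ℝ) ^ α) i) /
    (∑ i ∈ Finset.Icc 1 n, (i : ℝ) ^ α)) atTop (𝓝 d)

/-- The ideal `I_α` of sets of zero upper `α`-density. -/
def Ialpha (α : ℝ) : Set (Set ℕ) := {S | upperAlphaDensity α S = 0}


/-- For a metric space `X`, a lower semicontinuous submeasure `φ` on `ℕ`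
whose associated family `I_φ` is an ideal, a sequence `x` in `X` and `q > 0`, the set
`Λ_x(I_φ, q)` is closed. -/
theorem stmt0 {X : Type*} [MetricSpace X] (φ : LSCSubmeasure)
    (hI : IsIdealOnNat φ.ideal) (x : ℕ → X) (q : ℝ) (hq : 0 < q) :
    IsClosed (LambdaQ φ x q) := by
  have key : IsSeqClosed (LambdaQ φ x q) := by
    intro L l hL hLl
    have hL' : ∀ k, ∃ A : Set ℕ, ENNReal.ofReal q ≤ φ.norm A ∧ ConvergesAlong x A (L k) :=
      fun k => hL k
    choose A hA hconv using hL'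
    -- thresholds for convergence along A k
    have hconv' : ∀ k : ℕ, ∃ N : ℕ, ∀ n ≥ N, n ∈ A k → dist (x n) (L k) < 1/((k:ℝ)+1) := by
      intro k
      have h1 : (0:ℝ) < 1/((k:ℝ)+1) := by positivity
      have h2 := Metric.tendsto_nhds.mp (hconv k) _ h1
      rw [Filter.eventually_inf_principal] at h2
      exact eventually_atTop.mp h2
    choose N hN using hconv'
    -- block lemma
    have block : ∀ k n : ℕ, ∃ m : ℕ, n < m ∧
        ENNReal.ofReal (q - 1/((k:ℝ)+1)) ≤ φ.toFun ((A k \ {i | i < n}) ∩ {i | i < m}) := by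
      intro k n
      by_cases hneg : q - 1/((k:ℝ)+1) ≤ 0
      · refine ⟨n+1, Nat.lt_succ_self n, ?_⟩
        rw [ENNReal.ofReal_eq_zero.mpr hneg]
        exact zero_le'
      · have hlt : ENNReal.ofReal (q - 1/((k:ℝ)+1)) < ENNReal.ofReal q := by
          rw [ENNReal.ofReal_lt_ofReal_iff hq]
          have : (0:ℝ) < 1/((k:ℝ)+1) := by positivity
          linarith
        have hB : ENNReal.ofReal q ≤ φ.toFun (A k \ {i | i < n}) := by
          refine (hA k).trans ?_
          exact iInf_le (fun m => φ.toFun (A k \ {i | i < m})) n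
        have hev := (φ.lsc' (A k \ {i | i < n})).eventually
          (lt_mem_nhds (lt_of_lt_of_le hlt hB))
        obtain ⟨m, hm1, hm2⟩ := (hev.and (eventually_gt_atTop n)).exists
        exact ⟨m, hm2, hm1.le⟩
    choose M hM1 hM2 using block
    -- recursive sequence of cut points
    set nseq : ℕ → ℕ := fun k => Nat.rec 0 (fun k ih => M k (max (ih + 1) (N k))) k with hnseq
    set p : ℕ → ℕ := fun k => max (nseq k + 1) (N k) with hp
    have hstep : ∀ k, p k < nseq (k+1) := fun k => hM1 k (p k)
    set S : ℕ → Set ℕ := fun k => (A k \ {i | i < p k}) ∩ {i | i < nseq (k+1)} with hS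
    have hφS : ∀ k : ℕ, ENNReal.ofReal (q - 1/((k:ℝ)+1)) ≤ φ.toFun (S k) := fun k => hM2 k (p k)
    have hsm : StrictMono nseq := by
      apply strictMono_nat_of_lt_succ
      intro k
      have := hstep k
      have h2 : nseq k + 1 ≤ p k := le_max_left _ _
      omega
    have hmemS : ∀ k i, i ∈ S k → i ∈ A k ∧ p k ≤ i ∧ i < nseq (k+1) := by
      intro k i hi
      simp only [hS, Set.mem_inter_iff, Set.mem_diff, Set.mem_setOf_eq, not_lt] at hi
      exact ⟨hi.1.1, hi.1.2, hi.2⟩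
    have hSge : ∀ k i, i ∈ S k → k < i := by
      intro k i hi
      have h1 := (hmemS k i hi).2.1
      have h2 : nseq k + 1 ≤ p k := le_max_left _ _
      have h3 : k ≤ nseq k := hsm.le_apply
      omega
    refine ⟨⋃ k, S k, ?_, ?_⟩
    · -- norm bound
      rw [LSCSubmeasure.norm]
      refine le_iInf fun m => ?_
      have hlim : Tendsto (fun J : ℕ => ENNReal.ofReal (q - 1/((J:ℝ)+1))) atTop
          (𝓝 (ENNReal.ofReal q)) := by
        have h0 : Tendsto (fun J : ℕ => q - 1/((J:ℝ)+1)) atTop (𝓝 q) := by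
          have h1 := (tendsto_const_nhds : Tendsto (fun _ : ℕ => q) atTop (𝓝 q)).sub
            tendsto_one_div_add_atTop_nhds_zero_nat
          simpa using h1
        exact (ENNReal.continuous_ofReal.tendsto q).comp h0
      refine le_of_tendsto hlim ?_
      filter_upwards [eventually_ge_atTop m] with J hJ
      refine (hφS J).trans (φ.mono' ?_)
      intro i hi
      have h1 := hmemS J i hi
      have h2 := hSge J i hi
      refine ⟨Set.mem_iUnion.mpr ⟨J, hi⟩, ?_⟩
      simp only [Set.mem_setOf_eq, not_lt]
      omega
    · -- convergence along the union
      rw [ConvergesAlong, Metric.tendsto_nhds]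
      intro ε hε
      rw [Filter.eventually_inf_principal]
      have hε2 : (0:ℝ) < ε/2 := by linarith
      have h1 : ∀ᶠ j : ℕ in atTop, 1/((j:ℝ)+1) < ε/2 :=
        tendsto_one_div_add_atTop_nhds_zero_nat.eventually (gt_mem_nhds hε2)
      have h2 : ∀ᶠ j : ℕ in atTop, dist (L j) l < ε/2 :=
        Metric.tendsto_nhds.mp hLl _ hε2
      obtain ⟨K, hK⟩ := eventually_atTop.mp (h1.and h2)
      rw [eventually_atTop]
      refine ⟨nseq K, fun n hn hmem => ?_⟩
      obtain ⟨j, hj⟩ := Set.mem_iUnion.mp hmem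
      obtain ⟨hjA, hjp, hjlt⟩ := hmemS j n hj
      have hjK : K ≤ j := by
        by_contra hc
        push_neg at hc
        have : nseq (j+1) ≤ nseq K := hsm.monotone hc
        omega
      obtain ⟨hKj1, hKj2⟩ := hK j hjK
      have hd1 : dist (x n) (L j) < 1/((j:ℝ)+1) := by
        refine hN j n ?_ hjA
        exact le_trans (le_max_right _ _) hjp
      calc dist (x n) l ≤ dist (x n) (L j) + dist (L j) l := dist_triangle _ _ _
        _ < ε/2 + ε/2 := by linarith
        _ = ε := by ring
  exact key.isClosed
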